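/- Let B ⊂ A be an extension of finite dimensional algebras and set M = A/B (a B-B-bimodule). If Tor_i^B(M, M^{⊗_B j}) = 0 for all i, j ≥ 1, then Tor_i^B(A, A) = 0 for all i ≥ 1. -/

import Mathlib

noncomputable section

open scoped TensorProduct
open MulOpposite

section BTensorCore

variable (B : Type) [Ring B]

/-- The balancing relations for the tensor product over `B` of a right `B`-module `M`
and a left `B`-module `N`. -/
def BTrel (M N : Type) [AddCommGroup M] [AddCommGroup N] [Module Bᵐᵒᵖ M] [Module B N] :
    Submodule ℤ (TensorProduct ℤ M N) :=
  Submodule.span ℤ {x | ∃ (m : M) (b : B) (n : N),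
    x = (op b • m) ⊗ₜ[ℤ] n - m ⊗ₜ[ℤ] (b • n)}

/-- The balanced tensor product `M ⊗_B N` of a right `B`-module `M` and a left `B`-module `N`,
realized as a quotient of the tensor product of abelian groups. -/
def BTensor (M N : Type) [AddCommGroup M] [AddCommGroup N] [Module Bᵐᵒᵖ M] [Module B N] : Type :=
  TensorProduct ℤ M N ⧸ BTrel B M N

instance (M N : Type) [AddCommGroup M] [AddCommGroup N] [Module Bᵐᵒᵖ M] [Module B N] :
    AddCommGroup (BTensor B M N) :=
  inferInstanceAs (AddCommGroup (TensorProduct ℤ M N ⧸ BTrel B M N))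

variable {M N : Type} [AddCommGroup M] [AddCommGroup N] [Module Bᵐᵒᵖ M] [Module B N]

/-- The class of `m ⊗ n` in `M ⊗_B N`. -/
def BTensor.tmul (m : M) (n : N) : BTensor B M N :=
  Submodule.Quotient.mk (m ⊗ₜ[ℤ] n)

/-- Functoriality of `M ⊗_B -` in the second (left-module) variable. -/
def BTensor.map₂ (Mfix : Type) [AddCommGroup Mfix] [Module Bᵐᵒᵖ Mfix]
    {N' : Type} [AddCommGroup N'] [Module B N'] (f : N →ₗ[B] N') :
    BTensor B Mfix N →ₗ[ℤ] BTensor B Mfix N' :=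
  Submodule.mapQ _ _ (TensorProduct.map LinearMap.id f.toAddMonoidHom.toIntLinearMap) (by
    rw [BTrel, Submodule.span_le]
    rintro x ⟨m, b, n, rfl⟩
    show TensorProduct.map LinearMap.id f.toAddMonoidHom.toIntLinearMap
      ((op b • m) ⊗ₜ[ℤ] n - m ⊗ₜ[ℤ] (b • n)) ∈ BTrel B Mfix N'
    simp only [map_sub, TensorProduct.map_tmul,
      LinearMap.id_coe, id_eq, AddMonoidHom.coe_toIntLinearMap, LinearMap.toAddMonoidHom_coe]
    rw [map_smul]
    exact Submodule.subset_span ⟨m, b, f n, rfl⟩)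

/-- Functoriality of `- ⊗_B N` in the first (right-module) variable. -/
def BTensor.map₁ (Nfix : Type) [AddCommGroup Nfix] [Module B Nfix]
    {M' : Type} [AddCommGroup M'] [Module Bᵐᵒᵖ M'] (g : M →ₗ[Bᵐᵒᵖ] M') :
    BTensor B M Nfix →ₗ[ℤ] BTensor B M' Nfix :=
  Submodule.mapQ _ _ (TensorProduct.map g.toAddMonoidHom.toIntLinearMap LinearMap.id) (by
    rw [BTrel, Submodule.span_le]
    rintro x ⟨m, b, n, rfl⟩
    show TensorProduct.map g.toAddMonoidHom.toIntLinearMap LinearMap.id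
      ((op b • m) ⊗ₜ[ℤ] n - m ⊗ₜ[ℤ] (b • n)) ∈ BTrel B M' Nfix
    simp only [map_sub, TensorProduct.map_tmul,
      LinearMap.id_coe, id_eq, AddMonoidHom.coe_toIntLinearMap, LinearMap.toAddMonoidHom_coe]
    rw [map_smul]
    exact Submodule.subset_span ⟨g m, b, n, rfl⟩)

theorem BTensor.map₂_mk (Mfix : Type) [AddCommGroup Mfix] [Module Bᵐᵒᵖ Mfix]
    {N' : Type} [AddCommGroup N'] [Module B N'] (f : N →ₗ[B] N') (y : Mfix ⊗[ℤ] N) :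
    BTensor.map₂ B Mfix f (Submodule.Quotient.mk y) =
      Submodule.Quotient.mk
        (TensorProduct.map LinearMap.id f.toAddMonoidHom.toIntLinearMap y) :=
  by rfl

theorem BTensor.map₁_mk (Nfix : Type) [AddCommGroup Nfix] [Module B Nfix]
    {M' : Type} [AddCommGroup M'] [Module Bᵐᵒᵖ M'] (g : M →ₗ[Bᵐᵒᵖ] M') (y : M ⊗[ℤ] Nfix) :
    BTensor.map₁ B Nfix g (Submodule.Quotient.mk y) =
      Submodule.Quotient.mk
        (TensorProduct.map g.toAddMonoidHom.toIntLinearMap LinearMap.id y) :=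
  by rfl

end BTensorCore

section LeftRight

variable (B : Type) [Ring B] (Γ : Type) [Ring Γ]
variable (M N : Type) [AddCommGroup M] [AddCommGroup N] [Module Bᵐᵒᵖ M] [Module B N]

section Left
variable [Module Γ M] [SMulCommClass Γ Bᵐᵒᵖ M]

/-- left scalar multiplication on `M`, as a right-`B`-linear map. -/
def lsmulRightLinear (g : Γ) : M →ₗ[Bᵐᵒᵖ] M where
  toFun := (g • ·)
  map_add' := smul_add g
  map_smul' := fun b m => by exact smul_comm g b m

instance BTensor.instSMulLeft : SMul Γ (BTensor B M N) :=
  ⟨fun g => BTensor.map₁ B N (lsmulRightLinear B Γ M g)⟩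

instance BTensor.leftModule : Module Γ (BTensor B M N) := by
  refine Function.Surjective.module Γ
    (⟨⟨(Submodule.Quotient.mk : TensorProduct ℤ M N → BTensor B M N), rfl⟩, fun x y => rfl⟩)
    (Submodule.Quotient.mk_surjective _) ?_
  intro g y
  show Submodule.Quotient.mk (g • y) = BTensor.map₁ B N (lsmulRightLinear B Γ M g)
    (Submodule.Quotient.mk y)
  rw [BTensor.map₁_mk]
  congr 1

end Left

section Right
variable [Module Γᵐᵒᵖ N] [SMulCommClass B Γᵐᵒᵖ N]

/-- right scalar multiplication on `N`, as a left-`B`-linear map. -/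
def rsmulLeftLinear (g : Γᵐᵒᵖ) : N →ₗ[B] N where
  toFun := (g • ·)
  map_add' := smul_add g
  map_smul' := fun b n => by exact (smul_comm b g n).symm

instance BTensor.instSMulRight : SMul Γᵐᵒᵖ (BTensor B M N) :=
  ⟨fun g => BTensor.map₂ B M (rsmulLeftLinear B Γ N g)⟩

instance BTensor.rightModule : Module Γᵐᵒᵖ (BTensor B M N) := by
  refine Function.Surjective.module Γᵐᵒᵖ
    (⟨⟨fun (y : N ⊗[ℤ] M) => (Submodule.Quotient.mk (TensorProduct.comm ℤ N M y) :
        BTensor B M N), by simp; rfl⟩, fun x y => by simp; rfl⟩) ?_ ?_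
  · intro x
    obtain ⟨y, rfl⟩ := Submodule.Quotient.mk_surjective _ x
    exact ⟨(TensorProduct.comm ℤ N M).symm y, by
      show Submodule.Quotient.mk ((TensorProduct.comm ℤ N M) ((TensorProduct.comm ℤ N M).symm y)) = _
      simp⟩
  · intro g y
    show Submodule.Quotient.mk ((TensorProduct.comm ℤ N M) (g • y)) =
      BTensor.map₂ B M (rsmulLeftLinear B Γ N g)
        (Submodule.Quotient.mk ((TensorProduct.comm ℤ N M) y))
    rw [BTensor.map₂_mk]
    congr 1
    induction y using TensorProduct.induction_on with
    | zero => simp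
    | tmul n m =>
        simp [TensorProduct.smul_tmul', rsmulLeftLinear, TensorProduct.comm_tmul]
    | add x y hx hy => simp [smul_add, hx, hy]

end Right

instance BTensor.smulCommClass [Module Γ M] [SMulCommClass Γ Bᵐᵒᵖ M]
    [Module Γᵐᵒᵖ N] [SMulCommClass B Γᵐᵒᵖ N] :
    SMulCommClass Γ Γᵐᵒᵖ (BTensor B M N) := by
  constructor
  intro g og x
  obtain ⟨y, rfl⟩ := Submodule.Quotient.mk_surjective _ x
  show (BTensor.map₁ B N (lsmulRightLinear B Γ M g)) ((BTensor.map₂ B M (rsmulLeftLinear B Γ N og)) _)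
    = (BTensor.map₂ B M (rsmulLeftLinear B Γ N og)) ((BTensor.map₁ B N (lsmulRightLinear B Γ M g)) _)
  rw [BTensor.map₂_mk, BTensor.map₁_mk, BTensor.map₁_mk, BTensor.map₂_mk]
  congr 1
  induction y using TensorProduct.induction_on with
  | zero => simp
  | tmul m n => simp [lsmulRightLinear, rsmulLeftLinear]
  | add x y hx hy => simp [hx, hy]

end LeftRight

section Bimod

variable (B : Type) [Ring B]

/-- A `B`-`B`-bimodule, packaged. -/
structure BBimod : Type 1 where
  X : Type
  [addcg : AddCommGroup X]
  [left : Module B X]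
  [right : Module Bᵐᵒᵖ X]
  [comm : SMulCommClass B Bᵐᵒᵖ X]

attribute [instance] BBimod.addcg BBimod.left BBimod.right BBimod.comm

variable {B}

/-- tensor product of bimodules over `B`. -/
def BBimod.tensor (M N : BBimod B) : BBimod B where
  X := BTensor B M.X N.X

/-- `M.pow j` is the tensor power `M^{⊗_B (j+1)}`. -/
def BBimod.pow (M : BBimod B) : ℕ → BBimod B
  | 0 => M
  | (j + 1) => M.tensor (M.pow j)

end Bimod

section Tor

variable (R : Type) [Ring R]

/-- `P`, `d`, `ε` form a projective resolution of the left `R`-module `N`. -/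
def IsProjResolution (N : Type) [AddCommGroup N] [Module R N]
    (P : ℕ → ModuleCat R) (d : ∀ i, P (i + 1) ⟶ P i) (ε : P 0 ⟶ ModuleCat.of R N) : Prop :=
  (∀ i, Module.Projective R (P i)) ∧ Function.Surjective ε ∧
    LinearMap.range (d 0).hom = LinearMap.ker ε.hom ∧
    ∀ i, LinearMap.range (d (i + 1)).hom = LinearMap.ker (d i).hom

/-- `Tor_i^R(M, N) = 0` for all `i ≥ 1`: for every projective resolution `P⬝` of `N`, the
complex `M ⊗_R P⬝` is exact in all positive degrees. -/
def TorVanishesPos (M : Type) [AddCommGroup M] [Module Rᵐᵒᵖ M]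
    (N : Type) [AddCommGroup N] [Module R N] : Prop :=
  ∀ (P : ℕ → ModuleCat R) (d : ∀ i, P (i + 1) ⟶ P i) (ε : P 0 ⟶ ModuleCat.of R N),
    IsProjResolution R N P d ε →
    ∀ i, LinearMap.range (BTensor.map₂ R M (d (i + 1)).hom) =
      LinearMap.ker (BTensor.map₂ R M (d i).hom)

end Tor

section Statement1Aux

variable {B : Type} [Ring B]

theorem btmap₂_comp {W : Type} [AddCommGroup W] [Module Bᵐᵒᵖ W]
    {N N' N'' : Type} [AddCommGroup N] [AddCommGroup N'] [AddCommGroup N'']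
    [Module B N] [Module B N'] [Module B N''] (g : N' →ₗ[B] N'') (f : N →ₗ[B] N') :
    BTensor.map₂ B W (g.comp f) = (BTensor.map₂ B W g).comp (BTensor.map₂ B W f) := by
  apply LinearMap.ext; intro x
  obtain ⟨y, rfl⟩ := Submodule.Quotient.mk_surjective _ x
  show BTensor.map₂ B W (g.comp f) (Submodule.Quotient.mk y) =
    BTensor.map₂ B W g (BTensor.map₂ B W f (Submodule.Quotient.mk y))
  rw [BTensor.map₂_mk, BTensor.map₂_mk, BTensor.map₂_mk]
  congr 1
  induction y using TensorProduct.induction_on with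
  | zero => simp
  | tmul w n => simp
  | add s t hs ht => simp only [map_add, hs, ht]

theorem btmap₂_zero {W : Type} [AddCommGroup W] [Module Bᵐᵒᵖ W]
    {N N' : Type} [AddCommGroup N] [AddCommGroup N'] [Module B N] [Module B N'] :
    BTensor.map₂ B W (0 : N →ₗ[B] N') = 0 := by
  apply LinearMap.ext; intro x
  obtain ⟨y, rfl⟩ := Submodule.Quotient.mk_surjective _ x
  rw [BTensor.map₂_mk]
  have h0 : ((0 : N →ₗ[B] N').toAddMonoidHom.toIntLinearMap) = (0 : N →ₗ[ℤ] N') := rfl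
  rw [h0, show TensorProduct.map (LinearMap.id : W →ₗ[ℤ] W) (0 : N →ₗ[ℤ] N') =
    LinearMap.lTensor W (0 : N →ₗ[ℤ] N') from rfl, LinearMap.lTensor_zero]
  simp
  rfl

theorem btmap₂_id {W : Type} [AddCommGroup W] [Module Bᵐᵒᵖ W]
    {N : Type} [AddCommGroup N] [Module B N] :
    BTensor.map₂ B W (LinearMap.id : N →ₗ[B] N) = LinearMap.id := by
  apply LinearMap.ext; intro x
  obtain ⟨y, rfl⟩ := Submodule.Quotient.mk_surjective _ x
  rw [BTensor.map₂_mk]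
  rw [show ((LinearMap.id : N →ₗ[B] N).toAddMonoidHom.toIntLinearMap) =
    (LinearMap.id : N →ₗ[ℤ] N) from rfl, TensorProduct.map_id]
  rfl

theorem btmap_comm {M M' N N' : Type} [AddCommGroup M] [AddCommGroup M']
    [AddCommGroup N] [AddCommGroup N'] [Module Bᵐᵒᵖ M] [Module Bᵐᵒᵖ M']
    [Module B N] [Module B N'] (g : M →ₗ[Bᵐᵒᵖ] M') (f : N →ₗ[B] N') (x : BTensor B M N) :
    BTensor.map₂ B M' f (BTensor.map₁ B N g x) =
      BTensor.map₁ B N' g (BTensor.map₂ B M f x) := by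
  obtain ⟨y, rfl⟩ := Submodule.Quotient.mk_surjective _ x
  rw [BTensor.map₁_mk, BTensor.map₂_mk, BTensor.map₂_mk, BTensor.map₁_mk]
  congr 1
  induction y using TensorProduct.induction_on with
  | zero => simp
  | tmul m n => simp
  | add s t hs ht => simp only [map_add, hs, ht]

theorem btmap₁_surjective {M M' N : Type} [AddCommGroup M] [AddCommGroup M']
    [AddCommGroup N] [Module Bᵐᵒᵖ M] [Module Bᵐᵒᵖ M'] [Module B N]
    (g : M →ₗ[Bᵐᵒᵖ] M') (hg : Function.Surjective g) :
    Function.Surjective (BTensor.map₁ B N g) := by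
  intro x
  obtain ⟨t, rfl⟩ := Submodule.Quotient.mk_surjective _ x
  obtain ⟨w, hw⟩ := LinearMap.rTensor_surjective (R := ℤ) N
    (g := g.toAddMonoidHom.toIntLinearMap) hg t
  exact ⟨Submodule.Quotient.mk w, by
    rw [BTensor.map₁_mk, show TensorProduct.map g.toAddMonoidHom.toIntLinearMap
      (LinearMap.id) w = LinearMap.rTensor N g.toAddMonoidHom.toIntLinearMap w from rfl, hw]⟩

/-- The map `p ↦ a ⊗ p` into the balanced tensor product. -/
def elemTensor (B : Type) [Ring B] {W : Type} [AddCommGroup W] [Module Bᵐᵒᵖ W] (a : W)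
    (X : Type) [AddCommGroup X] [Module B X] : X →ₗ[ℤ] BTensor B W X :=
  (BTrel B W X).mkQ.comp ((TensorProduct.mk ℤ W X) a)

theorem elemTensor_apply {W : Type} [AddCommGroup W] [Module Bᵐᵒᵖ W] (a : W)
    (X : Type) [AddCommGroup X] [Module B X] (p : X) :
    elemTensor B a X p = Submodule.Quotient.mk (a ⊗ₜ[ℤ] p) := rfl

theorem elemTensor_natural {W : Type} [AddCommGroup W] [Module Bᵐᵒᵖ W] (a : W)
    {X Y : Type} [AddCommGroup X] [Module B X] [AddCommGroup Y] [Module B Y]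
    (f : X →ₗ[B] Y) (p : X) :
    BTensor.map₂ B W f (elemTensor B a X p) = elemTensor B a Y (f p) := by
  rw [elemTensor_apply, BTensor.map₂_mk, elemTensor_apply]
  congr 1

/-- `π` as a left `B`-linear map. -/
def piLeftL {A T : Type} [AddCommGroup A] [Module B A] [AddCommGroup T] [Module B T]
    (π : A →+ T) (h : ∀ (b : B) (a : A), π (b • a) = b • π a) : A →ₗ[B] T where
  toFun := π
  map_add' := map_add π
  map_smul' := h

/-- `π` as a right `B`-linear map. -/
def piRightL {A T : Type} [AddCommGroup A] [Module Bᵐᵒᵖ A] [AddCommGroup T] [Module Bᵐᵒᵖ T]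
    (π : A →+ T) (h : ∀ (b : B) (a : A), π ((op b) • a) = (op b) • π a) : A →ₗ[Bᵐᵒᵖ] T where
  toFun := π
  map_add' := map_add π
  map_smul' := fun c a => by
    have := h c.unop a
    rwa [op_unop] at this

section KerRange

variable {k : Type} [Field k] {A : Type} [Ring A] [Algebra k A] [Algebra k B]
variable (ι : B →ₐ[k] A) [Module Bᵐᵒᵖ A]

/-- `ι` as a `ℤ`-linear map. -/
def iotaZ : B →ₗ[ℤ] A where
  toFun := ι
  map_add' := fun x y => map_add ι x y
  map_smul' := fun z b => by simp [map_zsmul]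

theorem ker_eq_range_elemTensor
    {T : Type} [AddCommGroup T] [Module Bᵐᵒᵖ T]
    (π : A →+ T) (hsurj : Function.Surjective π)
    (hAB : ∀ (b : B) (a : A), (op b) • a = a * ι b)
    (hπR : ∀ (b : B) (a : A), π ((op b) • a) = (op b) • π a)
    (hker : ∀ a : A, π a = 0 ↔ ∃ b : B, ι b = a)
    (X : Type) [AddCommGroup X] [Module B X] :
    LinearMap.ker (BTensor.map₁ B X (piRightL π hπR)) =
      LinearMap.range (elemTensor B (1 : A) X) := by
  apply le_antisymm
  · intro x hx
    obtain ⟨t, rfl⟩ := Submodule.Quotient.mk_surjective _ x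
    change BTensor.map₁ B X (piRightL π hπR) (Submodule.Quotient.mk t) = 0 at hx
    rw [BTensor.map₁_mk] at hx
    have hcoe : (piRightL π hπR).toAddMonoidHom.toIntLinearMap = π.toIntLinearMap := rfl
    rw [hcoe] at hx
    have hmem : LinearMap.rTensor X π.toIntLinearMap t ∈ BTrel B T X :=
      (Submodule.Quotient.mk_eq_zero _).mp hx
    -- the relations of `T ⊗ X` come from relations of `A ⊗ X`
    have hmapsub : BTrel B T X ≤
        Submodule.map (LinearMap.rTensor X π.toIntLinearMap) (BTrel B A X) := by
      rw [BTrel]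
      refine Submodule.span_le.mpr ?_
      rintro _ ⟨m, b, n, rfl⟩
      obtain ⟨a, rfl⟩ := hsurj m
      refine ⟨(op b • a) ⊗ₜ[ℤ] n - a ⊗ₜ[ℤ] (b • n),
        Submodule.subset_span ⟨a, b, n, rfl⟩, ?_⟩
      rw [map_sub, LinearMap.rTensor_tmul, LinearMap.rTensor_tmul]
      rw [show π.toIntLinearMap (op b • a) = op b • π a from hπR b a]
      rfl
    obtain ⟨s, hs, hst⟩ := hmapsub hmem
    have hexact : Function.Exact (iotaZ ι) π.toIntLinearMap := by
      intro a
      simpa [Set.mem_range, iotaZ] using hker a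
    have hz : LinearMap.rTensor X π.toIntLinearMap (t - s) = 0 := by
      rw [map_sub, hst, sub_self]
    obtain ⟨w, hw⟩ := (rTensor_exact X hexact hsurj (t - s)).mp hz
    have hmk : (Submodule.Quotient.mk t : BTensor B A X) = Submodule.Quotient.mk (t - s) := by
      rw [Submodule.Quotient.eq, sub_sub_cancel]
      exact hs
    rw [hmk, ← hw]
    -- now show the class of anything in the image of `B ⊗ X` is in the range
    clear hw hz hst hs hmem hx
    induction w using TensorProduct.induction_on with
    | zero => rw [map_zero]; exact ⟨0, by simp [elemTensor_apply]; rfl⟩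
    | tmul b p =>
        refine ⟨b • p, ?_⟩
        rw [LinearMap.rTensor_tmul, elemTensor_apply]
        refine (Submodule.Quotient.eq _).mpr ?_
        have h1 : op b • (1 : A) = ι b := by rw [hAB, one_mul]
        have hgen : (op b • (1 : A)) ⊗ₜ[ℤ] p - (1 : A) ⊗ₜ[ℤ] (b • p) ∈ BTrel B A X :=
          Submodule.subset_span ⟨1, b, p, rfl⟩
        rw [h1] at hgen
        have := neg_mem hgen
        simpa [iotaZ] using this
    | add s t hs ht =>
        rw [map_add, Submodule.Quotient.mk_add]
        exact add_mem hs ht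
  · rintro _ ⟨p, rfl⟩
    rw [LinearMap.mem_ker, elemTensor_apply, BTensor.map₁_mk]
    have hcoe : (piRightL π hπR).toAddMonoidHom.toIntLinearMap = π.toIntLinearMap := rfl
    rw [hcoe]
    have h1 : π (1 : A) = 0 := (hker 1).mpr ⟨1, map_one ι⟩
    rw [show (TensorProduct.map π.toIntLinearMap LinearMap.id) ((1 : A) ⊗ₜ[ℤ] p)
      = (π (1 : A)) ⊗ₜ[ℤ] p from rfl, h1]
    simp
    rfl

theorem elemTensor_one_injective
    (hι : Function.Injective ι)
    (hAB : ∀ (b : B) (a : A), (op b) • a = a * ι b)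
    (X : Type) [AddCommGroup X] [Module B X] (hproj : Module.Projective B X) :
    Function.Injective (elemTensor B (1 : A) X) := by
  -- first, the free (Finsupp) case
  have hfree : ∀ (Y : Type) [AddCommGroup Y] [Module B Y],
      ∀ f : Y →₀ B, elemTensor B (1 : A) (Y →₀ B) f = 0 → f = 0 := by
    intro Y _ _ f hf
    -- build the retraction-style map φ
    let blin : A →ₗ[ℤ] (Y →₀ B) →ₗ[ℤ] (Y →₀ A) := LinearMap.mk₂ ℤ
      (fun a g => Finsupp.mapRange (fun b => a * ι b) (by simp) g)
      (fun a₁ a₂ g => by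
        ext x
        simp [Finsupp.mapRange_apply, add_mul])
      (fun c a g => by
        ext x
        simp [Finsupp.mapRange_apply, smul_mul_assoc, mul_assoc])
      (fun a g₁ g₂ => by
        ext x
        simp [Finsupp.mapRange_apply, mul_add])
      (fun a c g => by
        ext x
        simp only [Finsupp.mapRange_apply, Finsupp.smul_apply, smul_eq_mul, zsmul_eq_mul,
          map_zsmul, map_mul, map_intCast]
        exact Commute.left_comm ((Int.cast_commute a c).symm) _)
    have hbal : BTrel B A (Y →₀ B) ≤ LinearMap.ker (TensorProduct.lift blin) := by
      rw [BTrel]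
      refine Submodule.span_le.mpr ?_
      rintro _ ⟨m, b, n, rfl⟩
      show TensorProduct.lift blin ((op b • m) ⊗ₜ[ℤ] n - m ⊗ₜ[ℤ] (b • n)) = 0
      simp only [map_sub, TensorProduct.lift.tmul]
      rw [sub_eq_zero]
      ext x
      simp only [blin, LinearMap.mk₂_apply, Finsupp.mapRange_apply, Finsupp.smul_apply,
        smul_eq_mul, hAB b m, map_mul, mul_assoc]
    let φ : BTensor B A (Y →₀ B) →ₗ[ℤ] (Y →₀ A) :=
      Submodule.liftQ (BTrel B A (Y →₀ B)) (TensorProduct.lift blin) hbal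
    have hφ : φ (elemTensor B (1 : A) (Y →₀ B) f)
        = Finsupp.mapRange (fun b => (1 : A) * ι b) (by simp) f := by
      rw [elemTensor_apply]
      rfl
    rw [hf, map_zero] at hφ
    have hpt : ∀ x, f x = 0 := by
      intro x
      have hx := DFunLike.congr_fun hφ.symm x
      rw [Finsupp.mapRange_apply, one_mul, Finsupp.zero_apply] at hx
      exact hι (show ι (f x) = ι 0 by rw [map_zero]; exact hx)
    exact Finsupp.ext hpt
  -- now the projective case
  rw [← LinearMap.ker_eq_bot, LinearMap.ker_eq_bot']
  intro p hp
  obtain ⟨s, hs⟩ := Module.projective_def.mp hproj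
  have h2 : elemTensor B (1 : A) (X →₀ B) (s p) = 0 := by
    rw [← elemTensor_natural (1 : A) s p, hp, map_zero]
  have h3 : s p = 0 := hfree X (s p) h2
  have := hs p
  rw [h3, map_zero] at this
  exact this.symm

end KerRange

section Cone

variable (P : ℕ → ModuleCat B)

/-- The modules of the mapping-cone style resolution of `A/B`. -/
def conP : ℕ → ModuleCat B
  | 0 => P 0
  | 1 => ModuleCat.of B ((P 1) × B)
  | (n+2) => P (n+2)

variable (d : ∀ i, P (i + 1) ⟶ P i) (f0 : B →ₗ[B] P 0)

/-- The differentials of the mapping-cone style resolution of `A/B`. -/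
def conD : ∀ i, conP P (i+1) ⟶ conP P i
  | 0 => ModuleCat.ofHom ((d 0).hom.comp (LinearMap.fst B (P 1) B) + f0.comp (LinearMap.snd B (P 1) B))
  | 1 => ModuleCat.ofHom ((LinearMap.inl B (P 1) B).comp (d 1).hom)
  | (n+2) => d (n+2)

theorem cone_isProjResolution
    {k : Type} [Field k] {A : Type} [Ring A] [Algebra k A] [Algebra k B]
    (ι : B →ₐ[k] A) (hι : Function.Injective ι)
    [Module B A]
    (T : Type) [AddCommGroup T] [Module B T]
    (π : A →+ T)
    (hπ : Function.Surjective π)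
    (hπleft : ∀ (b : B) (a : A), π (b • a) = b • π a)
    (hker : ∀ a : A, π a = 0 ↔ ∃ b : B, ι b = a)
    (ε : P 0 ⟶ ModuleCat.of B A)
    (hres : IsProjResolution B A P d ε)
    (hf0 : ∀ b, ε (f0 b) = ι b) :
    IsProjResolution B T (conP P) (conD P d f0) (ModuleCat.ofHom ((piLeftL π hπleft).comp ε.hom)) := by
  obtain ⟨hproj, hsurj, hzero, hexact⟩ := hres
  refine ⟨?_, ?_, ?_, ?_⟩
  · rintro (_ | _ | n)
    · exact hproj 0
    · haveI := hproj 1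
      show Module.Projective B ((P 1) × B)
      infer_instance
    · exact hproj (n + 2)
  · intro t
    obtain ⟨a, ha⟩ := hπ t
    obtain ⟨x, hx⟩ := hsurj a
    exact ⟨x, by show π (ε x) = t; rw [hx]; exact ha⟩
  · apply le_antisymm
    · rintro _ ⟨⟨p, b⟩, rfl⟩
      rw [LinearMap.mem_ker]
      show (piLeftL π hπleft) (ε (conD P d f0 0 (p, b))) = 0
      have h1 : ε (d 0 p) = 0 := by
        have : d 0 p ∈ LinearMap.ker ε.hom := hzero ▸ ⟨p, rfl⟩
        exact this
      have : conD P d f0 0 (p, b) = d 0 p + f0 b := rfl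
      rw [this, map_add, h1, zero_add, hf0]
      show π (ι b) = 0
      exact (hker _).mpr ⟨b, rfl⟩
    · intro x hx
      change ((P 0 : ModuleCat B) : Type) at x
      have hx1 := LinearMap.mem_ker.mp hx
      have hx2 : π (ε x) = 0 := hx1
      obtain ⟨b, hb⟩ := (hker (ε x)).mp hx2
      have h1 : ε (x - f0 b) = 0 := by rw [map_sub, hf0, hb, sub_self]
      have h2 : x - f0 b ∈ LinearMap.range (d 0).hom := by
        rw [hzero]; exact h1
      obtain ⟨p, hp⟩ := h2
      refine ⟨(p, b), ?_⟩
      show d 0 p + f0 b = x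
      rw [hp, sub_add_cancel]
  · rintro (_ | _ | n)
    · -- range (conD 1) = ker (conD 0)
      apply le_antisymm
      · rintro _ ⟨q, rfl⟩
        rw [LinearMap.mem_ker]
        show conD P d f0 0 ((LinearMap.inl B (P 1) B) (d 1 q)) = 0
        have : conD P d f0 0 ((d 1 q, 0)) = d 0 (d 1 q) + f0 0 := rfl
        have hd01 : d 0 (d 1 q) = 0 := by
          have : d 1 q ∈ LinearMap.ker (d 0).hom := (hexact 0) ▸ ⟨q, rfl⟩
          exact this
        show d 0 (d 1 q) + f0 0 = 0
        rw [hd01, map_zero, add_zero]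
      · rintro ⟨p, b⟩ hx
        replace hx := LinearMap.mem_ker.mp hx
        have hx' : d 0 p + f0 b = 0 := hx
        have hb : ι b = 0 := by
          have := congrArg ε hx'
          rw [map_add, map_zero, hf0] at this
          have h1 : ε (d 0 p) = 0 := by
            have : d 0 p ∈ LinearMap.ker ε.hom := hzero ▸ ⟨p, rfl⟩
            exact this
          rwa [h1, zero_add] at this
        have hb0 : b = 0 := hι (by rw [hb, map_zero])
        have hp : d 0 p = 0 := by
          rw [hb0, map_zero, add_zero] at hx'
          exact hx'
        have : p ∈ LinearMap.range (d 1).hom := by rw [hexact 0]; exact hp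
        obtain ⟨q, hq⟩ := this
        refine ⟨q, ?_⟩
        show ((d 1 q : P 1), (0 : B)) = (p, b)
        rw [hq, hb0]
    · -- range (conD 2) = ker (conD 1)
      apply le_antisymm
      · rintro _ ⟨q, rfl⟩
        rw [LinearMap.mem_ker]
        show ((d 1 (d 2 q) : P 1), (0 : B)) = 0
        have hd12 : d 1 (d 2 q) = 0 := by
          have : d 2 q ∈ LinearMap.ker (d 1).hom := (hexact 1) ▸ ⟨q, rfl⟩
          exact this
        rw [hd12]
        rfl
      · intro p hp
        rw [LinearMap.mem_ker] at hp
        have hp' : ((d 1 p : P 1), (0 : B)) = 0 := hp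
        have h1 : d 1 p = 0 := congrArg Prod.fst hp'
        have : p ∈ LinearMap.range (d 2).hom := by rw [hexact 1]; exact h1
        exact this
    · exact hexact (n + 2)

theorem tor_transfer
    {T : Type} [AddCommGroup T] [Module Bᵐᵒᵖ T]
    (hd : ∀ i, (d i).hom.comp (d (i + 1)).hom = 0)
    (hcone : ∀ i, LinearMap.range (BTensor.map₂ B T (conD P d f0 (i + 1)).hom) =
      LinearMap.ker (BTensor.map₂ B T (conD P d f0 i).hom)) :
    ∀ i, LinearMap.range (BTensor.map₂ B T (d (i + 1)).hom) =
      LinearMap.ker (BTensor.map₂ B T (d i).hom) := by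
  have hsub : ∀ i, LinearMap.range (BTensor.map₂ B T (d (i + 1)).hom) ≤
      LinearMap.ker (BTensor.map₂ B T (d i).hom) := by
    rintro i _ ⟨y, rfl⟩
    have e := DFunLike.congr_fun (btmap₂_comp (B := B) (W := T) (d i).hom (d (i + 1)).hom) y
    rw [hd i, btmap₂_zero, LinearMap.zero_apply] at e
    exact LinearMap.mem_ker.mpr e.symm
  have hfstinl : (LinearMap.fst B (P 1) B).comp (LinearMap.inl B (P 1) B)
      = LinearMap.id := by
    apply LinearMap.ext; intro p; rfl
  rintro (_ | _ | n)
  · apply le_antisymm (hsub 0)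
    intro x hx
    rw [LinearMap.mem_ker] at hx
    have hcomp : (conD P d f0 0).hom.comp (LinearMap.inl B (P 1) B) = (d 0).hom := by
      apply LinearMap.ext; intro p
      show d 0 p + f0 0 = d 0 p
      rw [map_zero, add_zero]
    have h1 : BTensor.map₂ B T (conD P d f0 0).hom
        (BTensor.map₂ B T (LinearMap.inl B (P 1) B) x) = 0 := by
      have e := DFunLike.congr_fun
        (btmap₂_comp (B := B) (W := T) (conD P d f0 0).hom (LinearMap.inl B (P 1) B)) x
      rw [hcomp] at e
      have e2 : BTensor.map₂ B T (conD P d f0 0).hom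
          (BTensor.map₂ B T (LinearMap.inl B (P 1) B) x)
          = BTensor.map₂ B T (d 0).hom x := e.symm
      rw [e2, hx]
      rfl
    have h2 : BTensor.map₂ B T (LinearMap.inl B (P 1) B) x ∈
        LinearMap.range (BTensor.map₂ B T (conD P d f0 1).hom) := by
      rw [hcone 0]; exact h1
    obtain ⟨y, hy⟩ := h2
    refine ⟨y, ?_⟩
    have hfd : (LinearMap.fst B (P 1) B).comp (conD P d f0 1).hom = (d 1).hom := by
      apply LinearMap.ext; intro q; rfl
    have e1 := DFunLike.congr_fun
      (btmap₂_comp (B := B) (W := T) (LinearMap.fst B (P 1) B) (conD P d f0 1).hom) y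
    rw [hfd] at e1
    have e1' : BTensor.map₂ B T (d 1).hom y = BTensor.map₂ B T (LinearMap.fst B (P 1) B)
        (BTensor.map₂ B T (conD P d f0 1).hom y) := e1
    have e2 := DFunLike.congr_fun
      (btmap₂_comp (B := B) (W := T) (LinearMap.fst B (P 1) B) (LinearMap.inl B (P 1) B)) x
    rw [hfstinl, btmap₂_id, LinearMap.id_apply] at e2
    have e2' : x = BTensor.map₂ B T (LinearMap.fst B (P 1) B)
        (BTensor.map₂ B T (LinearMap.inl B (P 1) B) x) := e2
    show BTensor.map₂ B T (d 1).hom y = x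
    rw [e1', hy]
    exact e2'.symm
  · apply le_antisymm (hsub 1)
    intro x hx
    rw [LinearMap.mem_ker] at hx
    have h1 : BTensor.map₂ B T (conD P d f0 1).hom x = 0 := by
      have e := DFunLike.congr_fun
        (btmap₂_comp (B := B) (W := T) (LinearMap.inl B (P 1) B) (d 1).hom) x
      have e' : BTensor.map₂ B T (conD P d f0 1).hom x = BTensor.map₂ B T
          (LinearMap.inl B (P 1) B) (BTensor.map₂ B T (d 1).hom x) := e
      rw [hx, map_zero] at e'
      exact e'
    have h2 : x ∈ LinearMap.range (BTensor.map₂ B T (conD P d f0 2).hom) := by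
      rw [hcone 1]; exact h1
    exact h2
  · exact hcone (n + 2)

end Cone

end Statement1Aux

/-- For an extension `B ⊂ A` of finite dimensional algebras (encoded by an
injective algebra map `ι : B → A` together with the short exact sequence of
`B`-`B`-bimodules `0 → B → A → M → 0`, `M = A/B`), if
`Tor_i^B(M, M^{⊗_B j}) = 0` for all `i, j ≥ 1` then `Tor_i^B(A, A) = 0` for all `i ≥ 1`. -/
theorem statement1 (k : Type) [Field k]
    (A B : Type) [Ring A] [Ring B] [Algebra k A] [Algebra k B]
    [FiniteDimensional k A] [FiniteDimensional k B]
    (ι : B →ₐ[k] A) (hι : Function.Injective ι)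
    [Module B A] [Module Bᵐᵒᵖ A]
    (hBA : ∀ (b : B) (a : A), b • a = ι b * a)
    (hAB : ∀ (b : B) (a : A), (op b) • a = a * ι b)
    (M : BBimod B) (π : A →+ M.X)
    (hπ : Function.Surjective π)
    (hπL : ∀ (b : B) (a : A), π (ι b * a) = b • π a)
    (hπR : ∀ (b : B) (a : A), π (a * ι b) = (op b) • π a)
    (hker : ∀ a : A, π a = 0 ↔ ∃ b : B, ι b = a)
    (hTor : ∀ j : ℕ, TorVanishesPos B M.X (M.pow j).X) :
    TorVanishesPos B A A := by
  intro P d ε hres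
  obtain ⟨hproj, hsurjε, hzero, hexact⟩ := hres
  have hres' : IsProjResolution B A P d ε := ⟨hproj, hsurjε, hzero, hexact⟩
  have hπmop : ∀ (b : B) (a : A), π ((op b) • a) = (op b) • π a := fun b a => by
    rw [hAB, hπR]
  have hπleft : ∀ (b : B) (a : A), π (b • a) = b • π a := fun b a => by
    rw [hBA, hπL]
  obtain ⟨a0, ha0⟩ := hsurjε (1 : A)
  set f0 : B →ₗ[B] P 0 := LinearMap.toSpanSingleton B (P 0) a0 with hf0def
  have hf0 : ∀ b, ε (f0 b) = ι b := by
    intro b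
    have h : f0 b = b • a0 := rfl
    rw [h, map_smul, ha0]
    show b • (1 : A) = ι b
    rw [hBA, mul_one]
  have hconeres := cone_isProjResolution P d f0 ι hι M.X π hπ hπleft hker ε hres' hf0
  have hcone := hTor 0 (conP P) (conD P d f0) (ModuleCat.ofHom ((piLeftL π hπleft).comp ε.hom)) hconeres
  have hd : ∀ i, (d i).hom.comp (d (i + 1)).hom = 0 := by
    intro i
    apply LinearMap.ext
    intro p
    have h1 : d (i + 1) p ∈ LinearMap.ker (d i).hom := (hexact i) ▸ ⟨p, rfl⟩
    exact h1
  have exM := tor_transfer P d f0 hd hcone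
  intro i
  apply le_antisymm
  · rintro _ ⟨y, rfl⟩
    have e := DFunLike.congr_fun (btmap₂_comp (B := B) (W := A) (d i).hom (d (i + 1)).hom) y
    rw [hd i, btmap₂_zero, LinearMap.zero_apply] at e
    exact LinearMap.mem_ker.mpr e.symm
  · intro x hx
    have hx' : BTensor.map₂ B A (d i).hom x = 0 := LinearMap.mem_ker.mp hx
    set πR : A →ₗ[Bᵐᵒᵖ] M.X := piRightL π hπmop with hπRdef
    have h1 : BTensor.map₂ B M.X (d i).hom (BTensor.map₁ B (P (i + 1)) πR x) = 0 := by
      rw [btmap_comm, hx', map_zero]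
    have h2 : BTensor.map₁ B (P (i + 1)) πR x ∈
        LinearMap.range (BTensor.map₂ B M.X (d (i + 1)).hom) := by
      rw [exM i]; exact h1
    obtain ⟨z, hz⟩ := h2
    obtain ⟨y, rfl⟩ := btmap₁_surjective (N := ((P (i + 2) : ModuleCat B) : Type)) πR hπ z
    have h3 : BTensor.map₁ B (P (i + 1)) πR (x - BTensor.map₂ B A (d (i + 1)).hom y) = 0 := by
      rw [map_sub, ← btmap_comm, hz, sub_self]
    have h4 : x - BTensor.map₂ B A (d (i + 1)).hom y ∈
        LinearMap.range (elemTensor B (1 : A) (P (i + 1))) := by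
      rw [← ker_eq_range_elemTensor ι π hπ hAB hπmop hker (P (i + 1))]
      exact LinearMap.mem_ker.mpr h3
    obtain ⟨p, hp⟩ := h4
    have h5 : elemTensor B (1 : A) (P i) (d i p) = 0 := by
      have e := congrArg (BTensor.map₂ B A (d i).hom) hp
      rw [elemTensor_natural] at e
      rw [map_sub, hx'] at e
      have e2 := DFunLike.congr_fun (btmap₂_comp (B := B) (W := A) (d i).hom (d (i + 1)).hom) y
      rw [hd i, btmap₂_zero, LinearMap.zero_apply] at e2
      have e2' : BTensor.map₂ B A (d i).hom (BTensor.map₂ B A (d (i + 1)).hom y) = 0 := e2.symm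
      rw [e2', sub_zero] at e
      exact e
    have h6 : d i p = 0 := by
      have hinj := elemTensor_one_injective ι hι hAB (P i) (hproj i)
      apply hinj
      rw [h5, map_zero]
    have h7 : p ∈ LinearMap.range (d (i + 1)).hom := by rw [hexact i]; exact h6
    obtain ⟨q, hq⟩ := h7
    refine ⟨y + elemTensor B (1 : A) (P (i + 2)) q, ?_⟩
    rw [map_add, elemTensor_natural (1 : A) (d (i + 1)).hom q, hq, hp]
    abel
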